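/- In any profile whose antisymmetric margin function on {a,b,c,d} satisfies 0 < m(d,a) < m(b,d) < m(d,c) < m(a,c) < m(c,b) < m(b,a) (ordinal margin graph M_5), the defensible set is exactly {d}. -/
import Mathlib

inductive Alt : Type
  | a | b | c | d
deriving DecidableEq

open Alt

/-- For any antisymmetric margin function realizing M_5, the
defensible set is exactly {d}. -/
theorem defensible_M5 (m : Alt → Alt → ℤ) (hanti : ∀ x y, m x y = - m y x)
    (h1 : 0 < m d a) (h2 : m d a < m b d) (h3 : m b d < m d c)
    (h4 : m d c < m a c) (h5 : m a c < m c b) (h6 : m c b < m b a) :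
    {x : Alt | ∀ y : Alt, ∃ z : Alt, m y x ≤ m z y} = {d} := by
  have hxx : ∀ x, m x x = 0 := fun x => by have := hanti x x; linarith
  have haa := hxx a; have hbb := hxx b; have hcc := hxx c; have hdd := hxx d
  have hab := hanti a b; have hac := hanti a c; have had := hanti a d
  have hbc := hanti b c; have hbd := hanti b d; have hcd := hanti c d
  ext x
  simp only [Set.mem_setOf_eq, Set.mem_singleton_iff]
  constructor
  · intro h
    cases x with
    | a => exfalso; obtain ⟨z, hz⟩ := h b; cases z <;> linarith
    | b => exfalso; obtain ⟨z, hz⟩ := h c; cases z <;> linarith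
    | c => exfalso; obtain ⟨z, hz⟩ := h d; cases z <;> linarith
    | d => rfl
  · intro hx y
    subst hx
    cases y with
    | a => exact ⟨d, by linarith⟩
    | b => exact ⟨c, by linarith⟩
    | c => exact ⟨d, by linarith⟩
    | d => exact ⟨b, by linarith⟩
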